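/- arXiv:2212.14318 — 3 statements merged into one kernel-verified Lean document; each statement's English description precedes it below -/
import Mathlib

section
/- Let O = F_p·l where F_p is the normalized p×p DFT matrix and l an octonion unit. Then for any circulant quaternion matrix Q = Q_1 + Q_2·j (Q_1, Q_2 complex circulant), O·Q·O* = F_p·conj(Q_1)·F_p* - (F_p·Q_2·F_p*)·j, which is a diagonal quaternion matrix. -/
open Matrix Quaternion

/-- Embedding of the complex numbers into the quaternions (span of 1 and i). -/
noncomputable def cq (z : ℂ) : ℍ[ℝ] := ⟨z.re, z.im, 0, 0⟩

/-- The quaternion imaginary unit j. -/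
noncomputable def qj : ℍ[ℝ] := ⟨0, 0, 1, 0⟩

/-- The octonions, built from the quaternions by the Cayley–Dickson process:
`(a, b)` represents `a + b·l`. -/
def Oct : Type := ℍ[ℝ] × ℍ[ℝ]

noncomputable instance : AddCommGroup Oct :=
  inferInstanceAs (AddCommGroup (ℍ[ℝ] × ℍ[ℝ]))

/-- Cayley–Dickson multiplication, matching the standard octonion
multiplication table (e.g. `l·i = -il`, `(il)·(jl) = -k`). -/
noncomputable instance : Mul Oct :=
  ⟨fun x y => (x.1 * y.1 - star y.2 * x.2, y.2 * x.1 + x.2 * star y.1)⟩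

noncomputable instance : One Oct := ⟨((1 : ℍ[ℝ]), (0 : ℍ[ℝ]))⟩

/-- Octonion conjugation. -/
noncomputable instance : Star Oct := ⟨fun x => (star x.1, -x.2)⟩

/-- Embedding of the quaternions into the octonions. -/
noncomputable def qo (q : ℍ[ℝ]) : Oct := (q, 0)

/-- Embedding of the complex numbers into the octonions. -/
noncomputable def co (z : ℂ) : Oct := (cq z, 0)

/-- The octonion imaginary unit l. -/
noncomputable def ol : Oct := ((0 : ℍ[ℝ]), (1 : ℍ[ℝ]))

/-- The octonion imaginary unit j (the quaternion j viewed as an octonion). -/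
noncomputable def oj : Oct := (qj, 0)

/-! ### Auxiliary lemmas -/

section Aux

lemma circ_off (p : ℕ) (hp : 0 < p) (Fp : Matrix (Fin p) (Fin p) ℂ)
    (hF : ∀ s t, Fp s t =
      Complex.exp (-(2 * Real.pi * Complex.I) / p) ^ ((s : ℕ) * (t : ℕ)) / Real.sqrt p)
    (v : Fin p → ℂ) {s t : Fin p} (hst : s ≠ t) :
    (Fp * Matrix.circulant v * Fpᴴ) s t = 0 := by
  haveI : NeZero p := ⟨hp.ne'⟩
  set ζ := Complex.exp (-(2 * Real.pi * Complex.I) / p) with hζ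
  have hζp : ζ ^ p = 1 := by
    rw [hζ, ← Complex.exp_nat_mul]
    have h1 : (p:ℂ) * (-(2 * Real.pi * Complex.I) / p) = (-1 : ℤ) * (2 * Real.pi * Complex.I) := by
      have : (p:ℂ) ≠ 0 := Nat.cast_ne_zero.mpr hp.ne'
      field_simp
      ring
    rw [h1, Complex.exp_int_mul_two_pi_mul_I]
  have hmul : ζ * (starRingEnd ℂ) ζ = 1 := by
    rw [hζ, ← Complex.exp_conj, ← Complex.exp_add]
    have : (-(2 * ↑Real.pi * Complex.I) / ↑p) + (starRingEnd ℂ) (-(2 * ↑Real.pi * Complex.I) / ↑p) = 0 := by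
      simp [map_div₀, Complex.conj_I, Complex.conj_ofReal, map_ofNat]
      ring
    rw [this, Complex.exp_zero]
  have hξp : ((starRingEnd ℂ) ζ) ^ p = 1 := by
    rw [← map_pow, hζp, _root_.map_one]
  have hprim : IsPrimitiveRoot ζ p := by
    have h := Complex.isPrimitiveRoot_exp p hp.ne'
    have he : ζ = (Complex.exp (2 * Real.pi * Complex.I / p))⁻¹ := by
      rw [hζ, ← Complex.exp_neg, neg_div]
    rw [he]; exact h.inv
  set r := ζ ^ (s:ℕ) * ((starRingEnd ℂ) ζ) ^ (t:ℕ) with hr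
  have hsp : (ζ ^ (s:ℕ)) ^ p = 1 := by rw [← pow_mul, mul_comm, pow_mul, hζp, one_pow]
  have hrp : r ^ p = 1 := by
    rw [hr, mul_pow, hsp, ← pow_mul, mul_comm (t:ℕ) p, pow_mul, hξp, one_pow, one_mul]
  have hr1 : r ≠ 1 := by
    intro h1
    have h2 : ζ ^ (s:ℕ) = ζ ^ (t:ℕ) := by
      have h3 : ((starRingEnd ℂ) ζ * ζ) ^ (t:ℕ) = 1 := by rw [mul_comm, hmul, one_pow]
      calc ζ ^ (s:ℕ) = ζ ^ (s:ℕ) * (((starRingEnd ℂ) ζ * ζ) ^ (t:ℕ)) := by rw [h3, mul_one]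
        _ = (ζ ^ (s:ℕ) * ((starRingEnd ℂ) ζ) ^ (t:ℕ)) * ζ ^ (t:ℕ) := by rw [mul_pow]; ring
        _ = ζ ^ (t:ℕ) := by rw [← hr, h1, one_mul]
    exact hst (Fin.ext (hprim.pow_inj s.isLt t.isLt h2))
  have hgeom : ∑ m : Fin p, r ^ (m:ℕ) = 0 := by
    rw [Fin.sum_univ_eq_sum_range (fun i => r ^ i) p, geom_sum_eq hr1 p, hrp, sub_self, zero_div]
  have key : ∀ m j : Fin p, Fp s (j + m) * v j * star (Fp t m)
      = (ζ ^ (s:ℕ)) ^ (j:ℕ) * v j / ((Real.sqrt p : ℂ) * (Real.sqrt p : ℂ)) * r ^ (m:ℕ) := by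
    intro m j
    rw [hF, hF]
    have e1 : ζ ^ ((s:ℕ) * ((j + m : Fin p):ℕ)) = (ζ ^ (s:ℕ)) ^ (j:ℕ) * (ζ ^ (s:ℕ)) ^ (m:ℕ) := by
      rw [pow_mul, Fin.val_add, ← pow_eq_pow_mod _ hsp, pow_add]
    have e2 : star (ζ ^ ((t:ℕ) * (m:ℕ)) / (Real.sqrt p : ℂ))
        = (((starRingEnd ℂ) ζ) ^ (t:ℕ)) ^ (m:ℕ) / (Real.sqrt p : ℂ) := by
      rw [Complex.star_def, map_div₀, map_pow, Complex.conj_ofReal, ← pow_mul]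
    rw [e1, e2, hr, mul_pow]
    ring
  rw [Matrix.mul_apply]
  have step : ∀ m : Fin p, (Fp * Matrix.circulant v) s m * Fpᴴ m t
      = (∑ j : Fin p, (ζ ^ (s:ℕ)) ^ (j:ℕ) * v j / ((Real.sqrt p : ℂ) * (Real.sqrt p : ℂ))) * r ^ (m:ℕ) := by
    intro m
    rw [Matrix.mul_apply, Matrix.conjTranspose_apply, Finset.sum_mul, Finset.sum_mul]
    refine Fintype.sum_equiv (Equiv.subRight m) _ _ ?_
    intro x
    simp only [Equiv.subRight_apply]
    rw [Matrix.circulant_apply]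
    have h := key m (x - m)
    rwa [sub_add_cancel] at h
  rw [Finset.sum_congr rfl (fun m _ => step m), ← Finset.mul_sum, hgeom, mul_zero]

lemma oct_mul (x y : Oct) : x * y = (x.1 * y.1 - star y.2 * x.2, y.2 * x.1 + x.2 * star y.1) := rfl
lemma oct_add (a b c d : ℍ[ℝ]) : ((a, b) : Oct) + ((c, d) : Oct) = (a + c, b + d) := rfl
lemma oct_sub (x y : Oct) : x - y = (x.1 - y.1, x.2 - y.2) := rfl
lemma oct_zero : (0 : Oct) = ((0 : ℍ[ℝ]), (0 : ℍ[ℝ])) := rfl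
lemma oct_star (x : Oct) : star x = (star x.1, -x.2) := rfl

lemma oct_sum {ι : Type*} (s : Finset ι) (f g : ι → ℍ[ℝ]) :
    (∑ i ∈ s, ((f i, g i) : Oct)) = ((∑ i ∈ s, f i, ∑ i ∈ s, g i) : Oct) := by
  classical
  induction s using Finset.induction_on with
  | empty => simp [oct_zero]; rfl
  | insert _ _ h ih => rw [Finset.sum_insert h, Finset.sum_insert h, Finset.sum_insert h, ih, oct_add]

lemma cq_zero : cq 0 = 0 := by ext <;> simp [cq]
lemma cq_add (z w : ℂ) : cq (z + w) = cq z + cq w := by ext <;> simp only [Quaternion.re_add, Quaternion.imI_add, Quaternion.imJ_add, Quaternion.imK_add] <;> simp [cq]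
lemma cq_star (z : ℂ) : star (cq z) = cq ((starRingEnd ℂ) z) := by
  ext <;> simp only [Quaternion.re_star, Quaternion.imI_star, Quaternion.imJ_star, Quaternion.imK_star] <;> simp [cq]
lemma cq_sum {ι : Type*} (s : Finset ι) (f : ι → ℂ) :
    cq (∑ i ∈ s, f i) = ∑ i ∈ s, cq (f i) := by
  classical
  induction s using Finset.induction_on with
  | empty => simp [cq_zero]
  | insert _ _ h ih => rw [Finset.sum_insert h, Finset.sum_insert h, cq_add, ih]

lemma key_q (a b c d : ℂ) :
    cq ((starRingEnd ℂ) d) * (cq c * star (cq a + cq b * qj))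
      = cq (c * (starRingEnd ℂ) a * (starRingEnd ℂ) d) - cq (c * b * (starRingEnd ℂ) d) * qj := by
  ext <;> simp [Quaternion.re_mul, Quaternion.imI_mul, Quaternion.imJ_mul, Quaternion.imK_mul] <;> simp [cq, qj, Complex.mul_re, Complex.mul_im] <;> ring

section
variable (p : ℕ) (Fp Q1 Q2 : Matrix (Fin p) (Fin p) ℂ)
  (O Q : Matrix (Fin p) (Fin p) Oct)
  (hO : ∀ s t, O s t = co (Fp s t) * ol)
  (hQ : ∀ s t, Q s t = qo (cq (Q1 s t) + cq (Q2 s t) * qj))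

include hO hQ in
lemma entry_eq (s t : Fin p) :
    (O * Q * Oᴴ) s t =
      (cq ((Fp * Q1.map star * Fpᴴ) s t) - cq ((Fp * Q2 * Fpᴴ) s t) * qj, (0 : ℍ[ℝ])) := by
  have hOst : ∀ s t, O s t = (((0 : ℍ[ℝ]), cq (Fp s t)) : Oct) := by
    intro s t
    rw [hO, oct_mul]
    show ((_ : ℍ[ℝ]), (_ : ℍ[ℝ])) = _
    simp [co, ol]
  have hOQ : ∀ m, (O * Q) s m
      = (((0 : ℍ[ℝ]), ∑ k, cq (Fp s k) * star (cq (Q1 k m) + cq (Q2 k m) * qj)) : Oct) := by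
    intro m
    rw [Matrix.mul_apply]
    have h1 : ∀ k, O s k * Q k m
        = (((0 : ℍ[ℝ]), cq (Fp s k) * star (cq (Q1 k m) + cq (Q2 k m) * qj)) : Oct) := by
      intro k
      rw [hOst, hQ]; erw [oct_mul]
      show ((_ : ℍ[ℝ]), (_ : ℍ[ℝ])) = _
      simp [qo]
    rw [Finset.sum_congr rfl (fun k _ => h1 k)]; erw [oct_sum]
    simp; rfl
  have hterm : ∀ m, (O * Q) s m * Oᴴ m t
      = ((∑ k, cq ((starRingEnd ℂ) (Fp t m)) * (cq (Fp s k) *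
          star (cq (Q1 k m) + cq (Q2 k m) * qj)), (0 : ℍ[ℝ])) : Oct) := by
    intro m
    rw [Matrix.conjTranspose_apply, hOQ, hOst]; erw [oct_star, oct_mul]
    refine Prod.ext ?_ ?_ <;> simp [cq_star, Finset.mul_sum]
  rw [Matrix.mul_apply, Finset.sum_congr rfl (fun m _ => hterm m)]; erw [oct_sum]
  have expand : ∀ M : Matrix (Fin p) (Fin p) ℂ,
      cq ((Fp * M * Fpᴴ) s t) = ∑ m, ∑ k, cq (Fp s k * M k m * star (Fp t m)) := by
    intro M
    rw [Matrix.mul_apply, cq_sum]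
    refine Finset.sum_congr rfl fun m _ => ?_
    rw [Matrix.mul_apply, Matrix.conjTranspose_apply, Finset.sum_mul, cq_sum]
  have e1 : ∀ m k, cq ((starRingEnd ℂ) (Fp t m)) * (cq (Fp s k) *
        star (cq (Q1 k m) + cq (Q2 k m) * qj))
      = cq (Fp s k * (Q1.map star) k m * star (Fp t m))
        - cq (Fp s k * Q2 k m * star (Fp t m)) * qj := by
    intro m k
    rw [key_q]
    simp [Matrix.map_apply, Complex.star_def, mul_comm, mul_assoc, mul_left_comm]
  refine Prod.ext ?_ (by simp)
  show (∑ m, ∑ k, cq ((starRingEnd ℂ) (Fp t m)) * (cq (Fp s k) *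
        star (cq (Q1 k m) + cq (Q2 k m) * qj))) = _
  calc (∑ m, ∑ k, cq ((starRingEnd ℂ) (Fp t m)) * (cq (Fp s k) *
        star (cq (Q1 k m) + cq (Q2 k m) * qj)))
      = ∑ m, ∑ k, (cq (Fp s k * (Q1.map star) k m * star (Fp t m))
          - cq (Fp s k * Q2 k m * star (Fp t m)) * qj) :=
        Finset.sum_congr rfl fun m _ => Finset.sum_congr rfl fun k _ => e1 m k
    _ = cq ((Fp * Q1.map star * Fpᴴ) s t) - cq ((Fp * Q2 * Fpᴴ) s t) * qj := by
        rw [expand, expand, Finset.sum_mul]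
        simp only [Finset.sum_sub_distrib]
        congr 1
        refine Finset.sum_congr rfl fun m _ => ?_
        rw [Finset.sum_mul]
end

end Aux

/-- For `O = F_p·l` and any circulant quaternion matrix `Q = Q₁ + Q₂·j`
(`Q₁, Q₂` complex circulant), `O·Q·O* = F_p·conj(Q₁)·F_p* - (F_p·Q₂·F_p*)·j`,
which is a diagonal quaternion matrix. -/

theorem stmt16 (p : ℕ) (hp : 0 < p)
    (Fp : Matrix (Fin p) (Fin p) ℂ)
    (hF : ∀ s t, Fp s t =
      Complex.exp (-(2 * Real.pi * Complex.I) / p) ^ ((s : ℕ) * (t : ℕ)) / Real.sqrt p)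
    (O : Matrix (Fin p) (Fin p) Oct)
    (hO : ∀ s t, O s t = co (Fp s t) * ol)
    (Q1 Q2 : Matrix (Fin p) (Fin p) ℂ)
    (hQ1 : ∃ v, Q1 = Matrix.circulant v)
    (hQ2 : ∃ v, Q2 = Matrix.circulant v)
    (Q : Matrix (Fin p) (Fin p) Oct)
    (hQ : ∀ s t, Q s t = qo (cq (Q1 s t) + cq (Q2 s t) * qj)) :
    O * Q * Oᴴ =
      ((Fp * Q1.map star * Fpᴴ).map fun z => qo (cq z)) -
        ((Fp * Q2 * Fpᴴ).map fun z => qo (cq z * qj)) ∧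
    (O * Q * Oᴴ).IsDiag := by
  have hmain : O * Q * Oᴴ =
      ((Fp * Q1.map star * Fpᴴ).map fun z => qo (cq z)) -
        ((Fp * Q2 * Fpᴴ).map fun z => qo (cq z * qj)) := by
    ext s t
    rw [entry_eq p Fp Q1 Q2 O Q hO hQ s t, Matrix.sub_apply, Matrix.map_apply, Matrix.map_apply,
      oct_sub]
    simp [qo]; rfl
  refine ⟨hmain, ?_⟩
  intro s t hst
  rw [entry_eq p Fp Q1 Q2 O Q hO hQ s t]
  obtain ⟨v1, rfl⟩ := hQ1
  obtain ⟨v2, rfl⟩ := hQ2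
  have hm : (Matrix.circulant v1).map star = Matrix.circulant (fun i => star (v1 i)) := by
    ext i j
    simp [Matrix.map_apply, Matrix.circulant_apply]
  rw [hm, circ_off p hp Fp hF _ hst, circ_off p hp Fp hF _ hst, cq_zero]
  rw [oct_zero]
  simp; rfl
end

section
/- Let F = F_1 + F_2·j be a unitary p×p quaternion matrix with F_1, F_2 complex. If F·A·F* is diagonal for every circulant quaternion matrix A of size p×p, then for every real circulant p×p matrix Â, all eight matrices F_1·Â·F_1*, F_1·Â·F_1^T, F_1·Â·F_2^T, F_1·Â·F_2*, F_2·Â·F_1*, F_2·Â·F_1^T, F_2·Â·F_2^T, F_2·Â·F_2* are diagonal. -/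
open Matrix Quaternion

/-- The quaternion imaginary unit i. -/
noncomputable def qi' : ℍ[ℝ] := ⟨0, 1, 0, 0⟩

/-- The quaternion imaginary unit k. -/
noncomputable def qk' : ℍ[ℝ] := ⟨0, 0, 0, 1⟩

@[simp] lemma cq_re (z : ℂ) : (cq z).re = z.re := rfl

@[simp] lemma cq_imI (z : ℂ) : (cq z).imI = z.im := rfl

@[simp] lemma cq_imJ (z : ℂ) : (cq z).imJ = 0 := rfl

@[simp] lemma cq_imK (z : ℂ) : (cq z).imK = 0 := rfl

@[simp] lemma qj_re : (qj : ℍ[ℝ]).re = 0 := rfl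

@[simp] lemma qj_imI : (qj : ℍ[ℝ]).imI = 0 := rfl

@[simp] lemma qj_imJ : (qj : ℍ[ℝ]).imJ = 1 := rfl

@[simp] lemma qj_imK : (qj : ℍ[ℝ]).imK = 0 := rfl

@[simp] lemma qi_re : (qi' : ℍ[ℝ]).re = 0 := rfl

@[simp] lemma qi_imI : (qi' : ℍ[ℝ]).imI = 1 := rfl

@[simp] lemma qi_imJ : (qi' : ℍ[ℝ]).imJ = 0 := rfl

@[simp] lemma qi_imK : (qi' : ℍ[ℝ]).imK = 0 := rfl

@[simp] lemma qk_re : (qk' : ℍ[ℝ]).re = 0 := rfl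

@[simp] lemma qk_imI : (qk' : ℍ[ℝ]).imI = 0 := rfl

@[simp] lemma qk_imJ : (qk' : ℍ[ℝ]).imJ = 0 := rfl

@[simp] lemma qk_imK : (qk' : ℍ[ℝ]).imK = 1 := rfl

/-- First complex component of a quaternion. -/
noncomputable def c1h : ℍ[ℝ] →+ ℂ where
  toFun x := ⟨x.re, x.imI⟩
  map_zero' := by simp [Complex.ext_iff]
  map_add' x y := by simp [Complex.ext_iff]

/-- Second complex component of a quaternion. -/
noncomputable def c2h : ℍ[ℝ] →+ ℂ where
  toFun x := ⟨x.imJ, x.imK⟩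
  map_zero' := by simp [Complex.ext_iff]
  map_add' x y := by simp [Complex.ext_iff]

lemma c1h_apply (x : ℍ[ℝ]) : c1h x = ⟨x.re, x.imI⟩ := rfl

lemma c2h_apply (x : ℍ[ℝ]) : c2h x = ⟨x.imJ, x.imK⟩ := rfl

lemma c1h_mul (x y : ℍ[ℝ]) : c1h (x * y) = c1h x * c1h y - c2h x * (starRingEnd ℂ) (c2h y) := by
  simp only [c1h_apply, c2h_apply, AddMonoidHom.coe_mk, ZeroHom.coe_mk]
  simp only [Complex.ext_iff, Quaternion.re_mul, Quaternion.imI_mul, Complex.sub_re,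
    Complex.sub_im, Complex.mul_re, Complex.mul_im, Complex.conj_re, Complex.conj_im]
  constructor <;> ring

lemma c2h_mul (x y : ℍ[ℝ]) : c2h (x * y) = c1h x * c2h y + c2h x * (starRingEnd ℂ) (c1h y) := by
  simp only [c1h_apply, c2h_apply, AddMonoidHom.coe_mk, ZeroHom.coe_mk]
  simp only [Complex.ext_iff, Quaternion.imJ_mul, Quaternion.imK_mul, Complex.add_re,
    Complex.add_im, Complex.mul_re, Complex.mul_im, Complex.conj_re, Complex.conj_im]
  constructor <;> ring

lemma c1h_star (x : ℍ[ℝ]) : c1h (star x) = (starRingEnd ℂ) (c1h x) := by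
  simp only [c1h_apply, AddMonoidHom.coe_mk, ZeroHom.coe_mk]
  simp [Complex.ext_iff]

lemma c2h_star (x : ℍ[ℝ]) : c2h (star x) = - c2h x := by
  simp only [c2h_apply, AddMonoidHom.coe_mk, ZeroHom.coe_mk]
  simp [Complex.ext_iff]

section Mat
variable {p : ℕ}

lemma mapc1_mul (P Q : Matrix (Fin p) (Fin p) ℍ[ℝ]) :
    (P * Q).map c1h = P.map c1h * Q.map c1h - P.map c2h * (Q.map c2h).map (starRingEnd ℂ) := by
  ext i j
  simp only [Matrix.map_apply, Matrix.mul_apply, Matrix.sub_apply, map_sum,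
    ← Finset.sum_sub_distrib]
  exact Finset.sum_congr rfl fun a _ => c1h_mul _ _

lemma mapc2_mul (P Q : Matrix (Fin p) (Fin p) ℍ[ℝ]) :
    (P * Q).map c2h = P.map c1h * Q.map c2h + P.map c2h * (Q.map c1h).map (starRingEnd ℂ) := by
  ext i j
  simp only [Matrix.map_apply, Matrix.mul_apply, Matrix.add_apply, map_sum,
    ← Finset.sum_add_distrib]
  exact Finset.sum_congr rfl fun a _ => c2h_mul _ _

lemma isDiag_map_c1 {P : Matrix (Fin p) (Fin p) ℍ[ℝ]} (h : P.IsDiag) : (P.map c1h).IsDiag := by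
  intro i j hij; simp [Matrix.map_apply, h hij]

lemma isDiag_map_c2 {P : Matrix (Fin p) (Fin p) ℍ[ℝ]} (h : P.IsDiag) : (P.map c2h).IsDiag := by
  intro i j hij; simp [Matrix.map_apply, h hij]

lemma isDiag_smulI {X : Matrix (Fin p) (Fin p) ℂ} (h : (Complex.I • X).IsDiag) : X.IsDiag := by
  intro i j hij
  have := h hij
  simp only [Matrix.smul_apply, smul_eq_mul] at this
  simpa [Complex.I_ne_zero] using this

lemma isDiag_of_add_sub {X Y : Matrix (Fin p) (Fin p) ℂ}
    (h1 : (X + Y).IsDiag) (h2 : (X - Y).IsDiag) : X.IsDiag ∧ Y.IsDiag := by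
  constructor
  · intro i j hij
    have e1 := h1 hij; have e2 := h2 hij
    simp only [Matrix.add_apply, Matrix.sub_apply] at e1 e2
    linear_combination (e1 + e2) / 2
  · intro i j hij
    have e1 := h1 hij; have e2 := h2 hij
    simp only [Matrix.add_apply, Matrix.sub_apply] at e1 e2
    linear_combination (e1 - e2) / 2

end Mat

/-- Necessity: if the unitary quaternion matrix `F = F₁ + F₂·j` diagonalizes
every circulant quaternion matrix, then for every real circulant `Â` all eight
matrices `F₁·Â·F₁*`, `F₁·Â·F₁ᵀ`, `F₁·Â·F₂ᵀ`, `F₁·Â·F₂*`, `F₂·Â·F₁*`,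
`F₂·Â·F₁ᵀ`, `F₂·Â·F₂ᵀ`, `F₂·Â·F₂*` are diagonal. -/
theorem stmt18 (p : ℕ) (hp : 0 < p)
    (F1 F2 : Matrix (Fin p) (Fin p) ℂ)
    (F : Matrix (Fin p) (Fin p) ℍ[ℝ])
    (hF : ∀ s t, F s t = cq (F1 s t) + cq (F2 s t) * qj)
    (hunitary : F * Fᴴ = 1 ∧ Fᴴ * F = 1)
    (hdiag : ∀ A : Matrix (Fin p) (Fin p) ℍ[ℝ],
      (∃ v, A = Matrix.circulant v) → (F * A * Fᴴ).IsDiag) :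
    ∀ Ahat : Matrix (Fin p) (Fin p) ℝ, (∃ v, Ahat = Matrix.circulant v) →
      ((F1 * Ahat.map (fun r => (r : ℂ)) * F1ᴴ).IsDiag ∧
       (F1 * Ahat.map (fun r => (r : ℂ)) * F1ᵀ).IsDiag ∧
       (F1 * Ahat.map (fun r => (r : ℂ)) * F2ᵀ).IsDiag ∧
       (F1 * Ahat.map (fun r => (r : ℂ)) * F2ᴴ).IsDiag ∧
       (F2 * Ahat.map (fun r => (r : ℂ)) * F1ᴴ).IsDiag ∧
       (F2 * Ahat.map (fun r => (r : ℂ)) * F1ᵀ).IsDiag ∧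
       (F2 * Ahat.map (fun r => (r : ℂ)) * F2ᵀ).IsDiag ∧
       (F2 * Ahat.map (fun r => (r : ℂ)) * F2ᴴ).IsDiag) := by
  intro Ahat hcirc
  obtain ⟨v, hv⟩ := hcirc
  set M : Matrix (Fin p) (Fin p) ℂ := Ahat.map (fun r => (r : ℂ)) with hM
  -- components of F and Fᴴ
  have hFc1 : F.map c1h = F1 := by
    ext s t
    simp [Matrix.map_apply, hF s t, c1h_apply, Complex.ext_iff, Quaternion.re_mul, Quaternion.imI_mul, Quaternion.imJ_mul, Quaternion.imK_mul]
  have hFc2 : F.map c2h = F2 := by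
    ext s t
    simp [Matrix.map_apply, hF s t, c2h_apply, Complex.ext_iff, Quaternion.re_mul, Quaternion.imI_mul, Quaternion.imJ_mul, Quaternion.imK_mul]
  have hFHc1 : Fᴴ.map c1h = F1ᴴ := by
    ext s t
    rw [Matrix.map_apply, Matrix.conjTranspose_apply, c1h_star, Matrix.conjTranspose_apply,
      ← hFc1, Matrix.map_apply]
    rfl
  have hFHc2 : Fᴴ.map c2h = -(F2ᵀ) := by
    ext s t
    rw [Matrix.map_apply, Matrix.conjTranspose_apply, c2h_star, Matrix.neg_apply,
      Matrix.transpose_apply, ← hFc2, Matrix.map_apply]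
  have hstar2 : ((-(F2ᵀ) : Matrix (Fin p) (Fin p) ℂ)).map (starRingEnd ℂ) = -(F2ᴴ) := by
    ext s t; simp [Matrix.map_apply, Matrix.conjTranspose_apply]
  have hstar1 : (F1ᴴ).map (starRingEnd ℂ) = F1ᵀ := by
    ext s t; simp [Matrix.map_apply, Matrix.conjTranspose_apply]
  -- general formula
  have key : ∀ A : Matrix (Fin p) (Fin p) ℍ[ℝ],
      (F * A * Fᴴ).map c1h
        = F1 * (A.map c1h) * F1ᴴ + F1 * (A.map c2h) * F2ᴴ
          - F2 * ((A.map c2h).map (starRingEnd ℂ)) * F1ᴴ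
          + F2 * ((A.map c1h).map (starRingEnd ℂ)) * F2ᴴ
      ∧ (F * A * Fᴴ).map c2h
        = -(F1 * (A.map c1h) * F2ᵀ) + F1 * (A.map c2h) * F1ᵀ
          + F2 * ((A.map c2h).map (starRingEnd ℂ)) * F2ᵀ
          + F2 * ((A.map c1h).map (starRingEnd ℂ)) * F1ᵀ := by
    intro A
    constructor
    · rw [mapc1_mul, mapc1_mul, mapc2_mul, hFc1, hFc2, hFHc1, hFHc2, hstar2]
      noncomm_ring
    · rw [mapc2_mul, mapc1_mul, mapc2_mul, hFc1, hFc2, hFHc1, hFHc2, hstar1]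
      noncomm_ring
  -- real matrix facts
  have hMstar : M.map (starRingEnd ℂ) = M := by
    ext s t; simp [hM, Matrix.map_apply]
  have hIMstar : ((Complex.I • M)).map (starRingEnd ℂ) = -(Complex.I • M) := by
    ext s t; simp [hM, Matrix.map_apply]
  -- the four test matrices
  have mkA : ∀ q : ℍ[ℝ], ∃ w, Ahat.map (fun r => algebraMap ℝ ℍ[ℝ] r * q) = Matrix.circulant w := by
    intro q
    refine ⟨fun i => algebraMap ℝ ℍ[ℝ] (v i) * q, ?_⟩
    subst hv
    refine Matrix.ext fun i j => ?_
    simp only [Matrix.map_apply, Matrix.circulant_apply]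
  -- component maps of the four test matrices
  have hA1c1 : (Ahat.map (fun r => algebraMap ℝ ℍ[ℝ] r * (1:ℍ[ℝ]))).map c1h = M := by
    ext s t; simp [Matrix.map_apply, c1h_apply, hM, Complex.ext_iff, Quaternion.ext_iff, Quaternion.re_mul, Quaternion.imI_mul, Quaternion.imJ_mul, Quaternion.imK_mul]
  have hA1c2 : (Ahat.map (fun r => algebraMap ℝ ℍ[ℝ] r * (1:ℍ[ℝ]))).map c2h = 0 := by
    ext s t; simp [Matrix.map_apply, c2h_apply, Complex.ext_iff, Quaternion.ext_iff, Quaternion.re_mul, Quaternion.imI_mul, Quaternion.imJ_mul, Quaternion.imK_mul]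
  have hAic1 : (Ahat.map (fun r => algebraMap ℝ ℍ[ℝ] r * qi')).map c1h = Complex.I • M := by
    ext s t; simp [Matrix.map_apply, c1h_apply, hM, Complex.ext_iff, Quaternion.ext_iff, Quaternion.re_mul, Quaternion.imI_mul, Quaternion.imJ_mul, Quaternion.imK_mul]
  have hAic2 : (Ahat.map (fun r => algebraMap ℝ ℍ[ℝ] r * qi')).map c2h = 0 := by
    ext s t; simp [Matrix.map_apply, c2h_apply, Complex.ext_iff, Quaternion.ext_iff, Quaternion.re_mul, Quaternion.imI_mul, Quaternion.imJ_mul, Quaternion.imK_mul]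
  have hAjc1 : (Ahat.map (fun r => algebraMap ℝ ℍ[ℝ] r * qj)).map c1h = 0 := by
    ext s t; simp [Matrix.map_apply, c1h_apply, Complex.ext_iff, Quaternion.ext_iff, Quaternion.re_mul, Quaternion.imI_mul, Quaternion.imJ_mul, Quaternion.imK_mul]
  have hAjc2 : (Ahat.map (fun r => algebraMap ℝ ℍ[ℝ] r * qj)).map c2h = M := by
    ext s t; simp [Matrix.map_apply, c2h_apply, hM, Complex.ext_iff, Quaternion.ext_iff, Quaternion.re_mul, Quaternion.imI_mul, Quaternion.imJ_mul, Quaternion.imK_mul]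
  have hAkc1 : (Ahat.map (fun r => algebraMap ℝ ℍ[ℝ] r * qk')).map c1h = 0 := by
    ext s t; simp [Matrix.map_apply, c1h_apply, Complex.ext_iff, Quaternion.ext_iff, Quaternion.re_mul, Quaternion.imI_mul, Quaternion.imJ_mul, Quaternion.imK_mul]
  have hAkc2 : (Ahat.map (fun r => algebraMap ℝ ℍ[ℝ] r * qk')).map c2h = Complex.I • M := by
    ext s t; simp [Matrix.map_apply, c2h_apply, hM, Complex.ext_iff, Quaternion.ext_iff, Quaternion.re_mul, Quaternion.imI_mul, Quaternion.imJ_mul, Quaternion.imK_mul]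
  have hzstar : ((0 : Matrix (Fin p) (Fin p) ℂ)).map (starRingEnd ℂ) = 0 := by
    ext s t; simp
  -- q = 1
  have d1 := hdiag _ (mkA 1)
  have e11 : (F * (Ahat.map (fun r => algebraMap ℝ ℍ[ℝ] r * (1:ℍ[ℝ]))) * Fᴴ).map c1h
      = F1 * M * F1ᴴ + F2 * M * F2ᴴ := by
    rw [(key _).1, hA1c1, hA1c2, hzstar, hMstar]
    simp
  have e12 : (F * (Ahat.map (fun r => algebraMap ℝ ℍ[ℝ] r * (1:ℍ[ℝ]))) * Fᴴ).map c2h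
      = F2 * M * F1ᵀ - F1 * M * F2ᵀ := by
    rw [(key _).2, hA1c1, hA1c2, hzstar, hMstar]
    simp
    noncomm_ring
  -- q = i
  have di := hdiag _ (mkA qi')
  have ei1 : (F * (Ahat.map (fun r => algebraMap ℝ ℍ[ℝ] r * qi')) * Fᴴ).map c1h
      = Complex.I • (F1 * M * F1ᴴ - F2 * M * F2ᴴ) := by
    rw [(key _).1, hAic1, hAic2, hzstar, hIMstar]
    simp [Matrix.smul_mul, Matrix.mul_smul, smul_sub]
    abel
  have ei2 : (F * (Ahat.map (fun r => algebraMap ℝ ℍ[ℝ] r * qi')) * Fᴴ).map c2h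
      = Complex.I • (-(F1 * M * F2ᵀ) - F2 * M * F1ᵀ) := by
    rw [(key _).2, hAic1, hAic2, hzstar, hIMstar]
    simp [Matrix.smul_mul, Matrix.mul_smul, smul_sub, smul_neg]
    abel
  -- q = j
  have dj := hdiag _ (mkA qj)
  have ej1 : (F * (Ahat.map (fun r => algebraMap ℝ ℍ[ℝ] r * qj)) * Fᴴ).map c1h
      = F1 * M * F2ᴴ - F2 * M * F1ᴴ := by
    rw [(key _).1, hAjc1, hAjc2, hzstar, hMstar]
    simp
  have ej2 : (F * (Ahat.map (fun r => algebraMap ℝ ℍ[ℝ] r * qj)) * Fᴴ).map c2h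
      = F1 * M * F1ᵀ + F2 * M * F2ᵀ := by
    rw [(key _).2, hAjc1, hAjc2, hzstar, hMstar]
    simp
  -- q = k
  have dk := hdiag _ (mkA qk')
  have ek1 : (F * (Ahat.map (fun r => algebraMap ℝ ℍ[ℝ] r * qk')) * Fᴴ).map c1h
      = Complex.I • (F1 * M * F2ᴴ + F2 * M * F1ᴴ) := by
    rw [(key _).1, hAkc1, hAkc2, hzstar, hIMstar]
    simp [Matrix.smul_mul, Matrix.mul_smul, smul_add]
  have ek2 : (F * (Ahat.map (fun r => algebraMap ℝ ℍ[ℝ] r * qk')) * Fᴴ).map c2h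
      = Complex.I • (F1 * M * F1ᵀ - F2 * M * F2ᵀ) := by
    rw [(key _).2, hAkc1, hAkc2, hzstar, hIMstar]
    simp [Matrix.smul_mul, Matrix.mul_smul, smul_sub]
    abel
  -- collect diagonality facts
  have D11 : (F1 * M * F1ᴴ + F2 * M * F2ᴴ).IsDiag := e11 ▸ isDiag_map_c1 d1
  have D12 : (F2 * M * F1ᵀ - F1 * M * F2ᵀ).IsDiag := e12 ▸ isDiag_map_c2 d1
  have Di1 : (F1 * M * F1ᴴ - F2 * M * F2ᴴ).IsDiag := isDiag_smulI (ei1 ▸ isDiag_map_c1 di)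
  have Di2 : (-(F1 * M * F2ᵀ) - F2 * M * F1ᵀ).IsDiag := isDiag_smulI (ei2 ▸ isDiag_map_c2 di)
  have Dj1 : (F1 * M * F2ᴴ - F2 * M * F1ᴴ).IsDiag := ej1 ▸ isDiag_map_c1 dj
  have Dj2 : (F1 * M * F1ᵀ + F2 * M * F2ᵀ).IsDiag := ej2 ▸ isDiag_map_c2 dj
  have Dk1 : (F1 * M * F2ᴴ + F2 * M * F1ᴴ).IsDiag := isDiag_smulI (ek1 ▸ isDiag_map_c1 dk)
  have Dk2 : (F1 * M * F1ᵀ - F2 * M * F2ᵀ).IsDiag := isDiag_smulI (ek2 ▸ isDiag_map_c2 dk)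
  obtain ⟨G1, G2⟩ := isDiag_of_add_sub D11 Di1      -- F1MF1ᴴ, F2MF2ᴴ
  have Di2' : (F2 * M * F1ᵀ + F1 * M * F2ᵀ).IsDiag := by
    intro i j hij
    have := Di2 hij
    simp only [Matrix.sub_apply, Matrix.neg_apply, Matrix.add_apply] at this ⊢
    linear_combination -this
  obtain ⟨G3, G4⟩ := isDiag_of_add_sub Di2' D12     -- F2MF1ᵀ, F1MF2ᵀ
  obtain ⟨G5, G6⟩ := isDiag_of_add_sub Dk1 Dj1      -- F1MF2ᴴ, F2MF1ᴴ
  obtain ⟨G7, G8⟩ := isDiag_of_add_sub Dj2 Dk2      -- F1MF1ᵀ, F2MF2ᵀ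
  exact ⟨G1, G7, G4, G5, G6, G3, G8, G2⟩
end

section
/- Conversely, let F = F_1 + F_2·j be a unitary p×p quaternion matrix with F_1, F_2 complex. If for every real circulant p×p matrix Â all eight matrices F_1·Â·F_1*, F_1·Â·F_1^T, F_1·Â·F_2^T, F_1·Â·F_2*, F_2·Â·F_1*, F_2·Â·F_1^T, F_2·Â·F_2^T, F_2·Â·F_2* are diagonal, then F·A·F* is diagonal for every circulant quaternion matrix A of size p×p. -/
open Matrix Quaternion

@[simp] lemma qj_re_s19 : qj.re = 0 := rfl
@[simp] lemma qj_imI_s19 : qj.imI = 0 := rfl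
@[simp] lemma qj_imJ_s19 : qj.imJ = 1 := rfl
@[simp] lemma qj_imK_s19 : qj.imK = 0 := rfl

lemma cq_add_s19 (a b : ℂ) : cq (a+b) = cq a + cq b := by
  ext <;> simp

lemma key_mul (a b c d a' b' : ℂ) :
    (cq a + cq b * qj) * (cq c + cq d * qj) * star (cq a' + cq b' * qj)
    = cq ((a*c - b * star d) * star a' + (a*d + b * star c) * star b')
      + cq ((a*d + b * star c) * a' - (a*c - b * star d) * b') * qj := by
  ext <;>
    simp [Complex.ext_iff, Quaternion.re_mul, Quaternion.imI_mul, Quaternion.imJ_mul, Quaternion.imK_mul] <;>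
    ring

lemma decomp (q : ℍ[ℝ]) :
    q = cq (⟨q.re, q.imI⟩ : ℂ) + cq (⟨q.imJ, q.imK⟩ : ℂ) * qj := by
  ext <;> simp [Quaternion.re_mul, Quaternion.imI_mul, Quaternion.imJ_mul, Quaternion.imK_mul]

lemma czero (X Y : ℂ) (hX : X = 0) (hY : Y = 0) : cq X + cq Y * qj = 0 := by
  subst hX; subst hY; ext <;> simp [Quaternion.re_mul, Quaternion.imI_mul, Quaternion.imJ_mul, Quaternion.imK_mul]

lemma sum_cq {ι : Type*} [DecidableEq ι] (s : Finset ι) (f g : ι → ℂ) :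
    ∑ x ∈ s, (cq (f x) + cq (g x) * qj) = cq (∑ x ∈ s, f x) + cq (∑ x ∈ s, g x) * qj := by
  induction s using Finset.induction with
  | empty => ext <;> simp [Quaternion.re_mul, Quaternion.imI_mul, Quaternion.imJ_mul, Quaternion.imK_mul]
  | insert a s h ih => simp only [Finset.sum_insert h, ih, cq_add_s19, add_mul]; abel

lemma hyp_sumH (p : ℕ) (G H : Matrix (Fin p) (Fin p) ℂ) (r : Fin p → ℝ) (i k : Fin p)
    (hd : (G * (Matrix.circulant r).map (fun x => (x:ℂ)) * Hᴴ) i k = 0) :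
    ∑ t, ∑ s, G i s * (r (s-t):ℂ) * star (H k t) = 0 := by
  rw [← hd]
  simp [Matrix.mul_apply, Matrix.conjTranspose_apply, Finset.sum_mul, mul_assoc]

lemma hyp_sumT (p : ℕ) (G H : Matrix (Fin p) (Fin p) ℂ) (r : Fin p → ℝ) (i k : Fin p)
    (hd : (G * (Matrix.circulant r).map (fun x => (x:ℂ)) * Hᵀ) i k = 0) :
    ∑ t, ∑ s, G i s * (r (s-t):ℂ) * H k t = 0 := by
  rw [← hd]
  simp [Matrix.mul_apply, Matrix.transpose_apply, Finset.sum_mul, mul_assoc]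

/-- Sufficiency: let `F = F₁ + F₂·j` be a unitary quaternion matrix.  If for
every real circulant `Â` all eight matrices `F₁·Â·F₁*`, `F₁·Â·F₁ᵀ`,
`F₁·Â·F₂ᵀ`, `F₁·Â·F₂*`, `F₂·Â·F₁*`, `F₂·Â·F₁ᵀ`, `F₂·Â·F₂ᵀ`, `F₂·Â·F₂*` are
diagonal, then `F·A·F*` is diagonal for every circulant quaternion `A`. -/
theorem stmt19 (p : ℕ) (hp : 0 < p)
    (F1 F2 : Matrix (Fin p) (Fin p) ℂ)
    (F : Matrix (Fin p) (Fin p) ℍ[ℝ])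
    (hF : ∀ s t, F s t = cq (F1 s t) + cq (F2 s t) * qj)
    (hunitary : F * Fᴴ = 1 ∧ Fᴴ * F = 1)
    (height : ∀ Ahat : Matrix (Fin p) (Fin p) ℝ, (∃ v, Ahat = Matrix.circulant v) →
      ((F1 * Ahat.map (fun r => (r : ℂ)) * F1ᴴ).IsDiag ∧
       (F1 * Ahat.map (fun r => (r : ℂ)) * F1ᵀ).IsDiag ∧
       (F1 * Ahat.map (fun r => (r : ℂ)) * F2ᵀ).IsDiag ∧
       (F1 * Ahat.map (fun r => (r : ℂ)) * F2ᴴ).IsDiag ∧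
       (F2 * Ahat.map (fun r => (r : ℂ)) * F1ᴴ).IsDiag ∧
       (F2 * Ahat.map (fun r => (r : ℂ)) * F1ᵀ).IsDiag ∧
       (F2 * Ahat.map (fun r => (r : ℂ)) * F2ᵀ).IsDiag ∧
       (F2 * Ahat.map (fun r => (r : ℂ)) * F2ᴴ).IsDiag)) :
    ∀ A : Matrix (Fin p) (Fin p) ℍ[ℝ],
      (∃ v, A = Matrix.circulant v) → (F * A * Fᴴ).IsDiag := by
  rintro A ⟨v, rfl⟩ i k hik
  -- real component vectors
  set r1 : Fin p → ℝ := fun x => (v x).re with hr1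
  set r2 : Fin p → ℝ := fun x => (v x).imI with hr2
  set r3 : Fin p → ℝ := fun x => (v x).imJ with hr3
  set r4 : Fin p → ℝ := fun x => (v x).imK with hr4
  -- the 16 hypothesis sums
  have H1 := height (Matrix.circulant r1) ⟨r1, rfl⟩
  have H2 := height (Matrix.circulant r2) ⟨r2, rfl⟩
  have H3 := height (Matrix.circulant r3) ⟨r3, rfl⟩
  have H4 := height (Matrix.circulant r4) ⟨r4, rfl⟩
  have e111 := hyp_sumH p F1 F1 r1 i k (H1.1 hik)
  have e112 := hyp_sumH p F1 F1 r2 i k (H2.1 hik)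
  have e213 := hyp_sumH p F2 F1 r3 i k (H3.2.2.2.2.1 hik)
  have e214 := hyp_sumH p F2 F1 r4 i k (H4.2.2.2.2.1 hik)
  have e123 := hyp_sumH p F1 F2 r3 i k (H3.2.2.2.1 hik)
  have e124 := hyp_sumH p F1 F2 r4 i k (H4.2.2.2.1 hik)
  have e221 := hyp_sumH p F2 F2 r1 i k (H1.2.2.2.2.2.2.2 hik)
  have e222 := hyp_sumH p F2 F2 r2 i k (H2.2.2.2.2.2.2.2 hik)
  have t113 := hyp_sumT p F1 F1 r3 i k (H3.2.1 hik)
  have t114 := hyp_sumT p F1 F1 r4 i k (H4.2.1 hik)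
  have t211 := hyp_sumT p F2 F1 r1 i k (H1.2.2.2.2.2.1 hik)
  have t212 := hyp_sumT p F2 F1 r2 i k (H2.2.2.2.2.2.1 hik)
  have t121 := hyp_sumT p F1 F2 r1 i k (H1.2.2.1 hik)
  have t122 := hyp_sumT p F1 F2 r2 i k (H2.2.2.1 hik)
  have t223 := hyp_sumT p F2 F2 r3 i k (H3.2.2.2.2.2.2.1 hik)
  have t224 := hyp_sumT p F2 F2 r4 i k (H4.2.2.2.2.2.2.1 hik)
  -- entry expansion
  have hentry : (F * Matrix.circulant v * Fᴴ) i k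
      = ∑ t, ∑ s, F i s * Matrix.circulant v s t * star (F k t) := by
    simp [Matrix.mul_apply, Matrix.conjTranspose_apply, Finset.sum_mul, mul_assoc]
  rw [hentry]
  -- complex coefficient functions
  set z1 : Fin p → ℂ := fun x => ⟨r1 x, r2 x⟩ with hz1
  set z2 : Fin p → ℂ := fun x => ⟨r3 x, r4 x⟩ with hz2
  have hterm : ∀ t s : Fin p, F i s * Matrix.circulant v s t * star (F k t)
      = cq ((F1 i s * z1 (s-t) - F2 i s * star (z2 (s-t))) * star (F1 k t)
          + (F1 i s * z2 (s-t) + F2 i s * star (z1 (s-t))) * star (F2 k t))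
        + cq ((F1 i s * z2 (s-t) + F2 i s * star (z1 (s-t))) * F1 k t
          - (F1 i s * z1 (s-t) - F2 i s * star (z2 (s-t))) * F2 k t) * qj := by
    intro t s
    rw [hF i s, hF k t, Matrix.circulant_apply, decomp (v (s - t))]
    exact key_mul _ _ _ _ _ _
  calc ∑ t, ∑ s, F i s * Matrix.circulant v s t * star (F k t)
      = ∑ t, ∑ s, (cq ((F1 i s * z1 (s-t) - F2 i s * star (z2 (s-t))) * star (F1 k t)
          + (F1 i s * z2 (s-t) + F2 i s * star (z1 (s-t))) * star (F2 k t))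
        + cq ((F1 i s * z2 (s-t) + F2 i s * star (z1 (s-t))) * F1 k t
          - (F1 i s * z1 (s-t) - F2 i s * star (z2 (s-t))) * F2 k t) * qj) := by
        exact Finset.sum_congr rfl fun t _ => Finset.sum_congr rfl fun s _ => hterm t s
    _ = 0 := by
        simp only [sum_cq]
        apply czero
        · -- X part
          have ptwise : ∀ t s : Fin p,
              (F1 i s * z1 (s-t) - F2 i s * star (z2 (s-t))) * star (F1 k t)
                + (F1 i s * z2 (s-t) + F2 i s * star (z1 (s-t))) * star (F2 k t)
              = (F1 i s * (r1 (s-t):ℂ) * star (F1 k t))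
                + Complex.I * (F1 i s * (r2 (s-t):ℂ) * star (F1 k t))
                - (F2 i s * (r3 (s-t):ℂ) * star (F1 k t))
                + Complex.I * (F2 i s * (r4 (s-t):ℂ) * star (F1 k t))
                + (F1 i s * (r3 (s-t):ℂ) * star (F2 k t))
                + Complex.I * (F1 i s * (r4 (s-t):ℂ) * star (F2 k t))
                + (F2 i s * (r1 (s-t):ℂ) * star (F2 k t))
                - Complex.I * (F2 i s * (r2 (s-t):ℂ) * star (F2 k t)) := by
            intro t s
            have h1 : z1 (s-t) = (r1 (s-t) : ℂ) + (r2 (s-t) : ℂ) * Complex.I := by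
              simp [hz1, Complex.ext_iff]
            have h2 : z2 (s-t) = (r3 (s-t) : ℂ) + (r4 (s-t) : ℂ) * Complex.I := by
              simp [hz2, Complex.ext_iff]
            rw [h1, h2]
            simp only [star_add, star_mul', Complex.star_def, Complex.conj_ofReal,
              Complex.conj_I]
            ring
          calc (∑ t, ∑ s, ((F1 i s * z1 (s-t) - F2 i s * star (z2 (s-t))) * star (F1 k t)
                + (F1 i s * z2 (s-t) + F2 i s * star (z1 (s-t))) * star (F2 k t)))
              = (∑ t, ∑ s, F1 i s * (r1 (s-t):ℂ) * star (F1 k t))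
                + Complex.I * (∑ t, ∑ s, F1 i s * (r2 (s-t):ℂ) * star (F1 k t))
                - (∑ t, ∑ s, F2 i s * (r3 (s-t):ℂ) * star (F1 k t))
                + Complex.I * (∑ t, ∑ s, F2 i s * (r4 (s-t):ℂ) * star (F1 k t))
                + (∑ t, ∑ s, F1 i s * (r3 (s-t):ℂ) * star (F2 k t))
                + Complex.I * (∑ t, ∑ s, F1 i s * (r4 (s-t):ℂ) * star (F2 k t))
                + (∑ t, ∑ s, F2 i s * (r1 (s-t):ℂ) * star (F2 k t))
                - Complex.I * (∑ t, ∑ s, F2 i s * (r2 (s-t):ℂ) * star (F2 k t)) := by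
                simp only [ptwise, Finset.sum_add_distrib, Finset.sum_sub_distrib,
                  ← Finset.mul_sum]
            _ = 0 := by rw [e111, e112, e213, e214, e123, e124, e221, e222]; ring
        · -- Y part
          have ptwise : ∀ t s : Fin p,
              (F1 i s * z2 (s-t) + F2 i s * star (z1 (s-t))) * F1 k t
                - (F1 i s * z1 (s-t) - F2 i s * star (z2 (s-t))) * F2 k t
              = (F1 i s * (r3 (s-t):ℂ) * F1 k t)
                + Complex.I * (F1 i s * (r4 (s-t):ℂ) * F1 k t)
                + (F2 i s * (r1 (s-t):ℂ) * F1 k t)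
                - Complex.I * (F2 i s * (r2 (s-t):ℂ) * F1 k t)
                - (F1 i s * (r1 (s-t):ℂ) * F2 k t)
                - Complex.I * (F1 i s * (r2 (s-t):ℂ) * F2 k t)
                + (F2 i s * (r3 (s-t):ℂ) * F2 k t)
                - Complex.I * (F2 i s * (r4 (s-t):ℂ) * F2 k t) := by
            intro t s
            have h1 : z1 (s-t) = (r1 (s-t) : ℂ) + (r2 (s-t) : ℂ) * Complex.I := by
              simp [hz1, Complex.ext_iff]
            have h2 : z2 (s-t) = (r3 (s-t) : ℂ) + (r4 (s-t) : ℂ) * Complex.I := by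
              simp [hz2, Complex.ext_iff]
            rw [h1, h2]
            simp only [star_add, star_mul', Complex.star_def, Complex.conj_ofReal,
              Complex.conj_I]
            ring
          calc (∑ t, ∑ s, ((F1 i s * z2 (s-t) + F2 i s * star (z1 (s-t))) * F1 k t
                - (F1 i s * z1 (s-t) - F2 i s * star (z2 (s-t))) * F2 k t))
              = (∑ t, ∑ s, F1 i s * (r3 (s-t):ℂ) * F1 k t)
                + Complex.I * (∑ t, ∑ s, F1 i s * (r4 (s-t):ℂ) * F1 k t)
                + (∑ t, ∑ s, F2 i s * (r1 (s-t):ℂ) * F1 k t)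
                - Complex.I * (∑ t, ∑ s, F2 i s * (r2 (s-t):ℂ) * F1 k t)
                - (∑ t, ∑ s, F1 i s * (r1 (s-t):ℂ) * F2 k t)
                - Complex.I * (∑ t, ∑ s, F1 i s * (r2 (s-t):ℂ) * F2 k t)
                + (∑ t, ∑ s, F2 i s * (r3 (s-t):ℂ) * F2 k t)
                - Complex.I * (∑ t, ∑ s, F2 i s * (r4 (s-t):ℂ) * F2 k t) := by
                simp only [ptwise, Finset.sum_add_distrib, Finset.sum_sub_distrib,
                  ← Finset.mul_sum]
            _ = 0 := by rw [t113, t114, t211, t212, t121, t122, t223, t224]; ring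
end
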